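/- Let G be a finite group satisfying G = P ⋊ F, where P is a normal cyclic p-group for some prime p, F is a complement of P with |F| coprime to p. If u ∈ P and x ∈ F does not centralize P, then the order of ux equals the order of x. -/

import Mathlib

theorem orderOf_mul_of_not_centralizing {G : Type*} [Group G] [Fintype G] (p : ℕ)
    (hp : p.Prime) (P : Subgroup G) (hPnormal : P.Normal) (hPcyc : IsCyclic P)
    (hPp : IsPGroup p P) (F : Subgroup G) (hcompl : P.IsComplement' F)
    (hcop : Nat.Coprime (Nat.card F) p)
    (u : G) (hu : u ∈ P) (x : G) (hx : x ∈ F)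
    (hnc : ¬ ∀ v ∈ P, x * v = v * x) :
    orderOf (u * x) = orderOf x := by
  haveI : Fact p.Prime := ⟨hp⟩
  set n := orderOf x with hn
  -- conjugation by x on P is a power map
  obtain ⟨m, hm⟩ := MonoidHom.map_cyclic (MulAut.conjNormal (H := P) x).toMonoidHom
  have hconj : ∀ v : G, v ∈ P → x * v * x⁻¹ = v ^ m := by
    intro v hv
    have h1 := hm ⟨v, hv⟩
    have h2 := congrArg Subtype.val h1
    simpa [MulAut.conjNormal_apply, SubgroupClass.coe_zpow] using h2
  have hconj_pow : ∀ j : ℕ, ∀ v : G, v ∈ P → x ^ j * v * (x ^ j)⁻¹ = v ^ (m ^ j) := by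
    intro j
    induction j with
    | zero => intro v hv; simp
    | succ j ih =>
      intro v hv
      have h1 : x ^ (j + 1) * v * (x ^ (j + 1))⁻¹
          = x * (x ^ j * v * (x ^ j)⁻¹) * x⁻¹ := by group
      rw [h1, ih v hv, hconj _ (P.zpow_mem hv _), ← zpow_mul, ← pow_succ]
  -- key product formula
  have hkey : ∀ j : ℕ, (u * x) ^ j = u ^ (∑ i ∈ Finset.range j, m ^ i) * x ^ j := by
    intro j
    induction j with
    | zero => simp
    | succ j ih =>
      have h1 : x ^ j * u * (x ^ j)⁻¹ = u ^ (m ^ j) := hconj_pow j u hu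
      rw [pow_succ, ih, Finset.sum_range_succ, zpow_add, ← h1]
      group
  -- order of u divides m^n - 1
  have hxn : x ^ n = 1 := pow_orderOf_eq_one x
  have hdvd1 : (orderOf u : ℤ) ∣ m ^ n - 1 := by
    have h1 : u ^ (m ^ n : ℤ) = u := by
      have := hconj_pow n u hu
      rw [hxn] at this
      simpa using this.symm
    rw [orderOf_dvd_iff_zpow_eq_one, zpow_sub, h1, zpow_one, mul_inv_cancel]
  -- order of u is a power of p
  obtain ⟨e, he⟩ : ∃ e, orderOf u = p ^ e := by
    obtain ⟨k, hk⟩ := hPp ⟨u, hu⟩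
    have h1 : orderOf (⟨u, hu⟩ : P) ∣ p ^ k := orderOf_dvd_of_pow_eq_one hk
    obtain ⟨e, _, he⟩ := (Nat.dvd_prime_pow hp).mp h1
    exact ⟨e, (Subgroup.orderOf_mk u hu) ▸ he⟩
  -- n is coprime to p
  have hnF : n ∣ Nat.card F := by
    rw [hn, ← Subgroup.orderOf_mk x hx]
    exact orderOf_dvd_natCard _
  have hnp : Nat.Coprime p n :=
    Nat.Coprime.coprime_dvd_right hnF hcop.symm
  -- p does not divide m - 1
  have hm1 : ¬ (p : ℤ) ∣ m - 1 := by
    intro hdvd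
    obtain ⟨k, hk⟩ := hPp.exists_card_eq
    have hk0 : k ≠ 0 := by
      intro h0
      rw [h0, pow_zero, Subgroup.card_eq_one] at hk
      apply hnc
      intro v hv
      rw [hk, Subgroup.mem_bot] at hv
      simp [hv]
    obtain ⟨k', rfl⟩ := Nat.exists_eq_succ_of_ne_zero hk0
    have hmp : ((m : ℤ) : ZMod p) = 1 := by
      have h1 := (ZMod.intCast_zmod_eq_zero_iff_dvd _ p).mpr hdvd
      push_cast at h1
      exact sub_eq_zero.mp h1
    -- induction: p^(j+1) ∣ m^(p^j) - 1
    have haux : ∀ j : ℕ, (p : ℤ) ^ (j + 1) ∣ m ^ (p ^ j) - 1 := by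
      intro j
      induction j with
      | zero => simpa using hdvd
      | succ j ih =>
        have hsum : (p : ℤ) ∣ ∑ i ∈ Finset.range p, (m ^ (p ^ j)) ^ i := by
          rw [← ZMod.intCast_zmod_eq_zero_iff_dvd]
          push_cast
          rw [hmp]
          simp [ZMod.natCast_self]
        have heq : m ^ (p ^ (j + 1)) - 1
            = (∑ i ∈ Finset.range p, (m ^ (p ^ j)) ^ i) * (m ^ (p ^ j) - 1) := by
          rw [geom_sum_mul, ← pow_mul, ← pow_succ]
        rw [heq]
        calc (p : ℤ) ^ (j + 1 + 1) = p * p ^ (j + 1) := by ring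
          _ ∣ (∑ i ∈ Finset.range p, (m ^ (p ^ j)) ^ i) * (m ^ (p ^ j) - 1) :=
            mul_dvd_mul hsum ih
    have hA : ((Nat.card P : ℕ) : ℤ) ∣ m ^ (p ^ k') - 1 := by
      rw [hk]
      exact_mod_cast haux k'
    -- card P divides m^n - 1 via a generator
    have hB : ((Nat.card P : ℕ) : ℤ) ∣ m ^ n - 1 := by
      haveI : Fintype ↥P := Fintype.ofFinite _
      obtain ⟨g, hg⟩ := hPcyc.exists_generator
      have hgord : orderOf (g : G) = Nat.card P := by
        rw [Subgroup.orderOf_coe, orderOf_eq_card_of_forall_mem_zpowers hg,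
          Nat.card_eq_fintype_card]
      have h1 : (g : G) ^ (m ^ n : ℤ) = (g : G) := by
        have := hconj_pow n (g : G) g.2
        rw [hxn] at this
        simpa using this.symm
      rw [← hgord]
      rw [orderOf_dvd_iff_zpow_eq_one, zpow_sub, h1, zpow_one, mul_inv_cancel]
    -- conclude m ≡ 1 mod card P
    have hcard1 : 1 < Nat.card P := by
      rw [hk]
      exact Nat.one_lt_pow (Nat.succ_ne_zero k') hp.one_lt
    haveI : NeZero (Nat.card P) := ⟨by omega⟩
    set M : ZMod (Nat.card P) := ((m : ℤ) : ZMod (Nat.card P)) with hM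
    have hM1 : M ^ (p ^ k') = 1 := by
      have h1 := (ZMod.intCast_zmod_eq_zero_iff_dvd _ _).mpr hA
      push_cast at h1
      exact sub_eq_zero.mp h1
    have hM2 : M ^ n = 1 := by
      have h1 := (ZMod.intCast_zmod_eq_zero_iff_dvd _ _).mpr hB
      push_cast at h1
      exact sub_eq_zero.mp h1
    have hMone : M = 1 := by
      have h1 : orderOf M ∣ p ^ k' := orderOf_dvd_of_pow_eq_one hM1
      have h2 : orderOf M ∣ n := orderOf_dvd_of_pow_eq_one hM2
      have h3 : orderOf M ∣ 1 := by
        have := Nat.dvd_gcd h1 h2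
        rwa [Nat.Coprime.gcd_eq_one (hnp.pow_left k')] at this
      exact orderOf_eq_one_iff.mp (Nat.dvd_one.mp h3)
    have hPdvd : ((Nat.card P : ℕ) : ℤ) ∣ m - 1 := by
      rw [← ZMod.intCast_zmod_eq_zero_iff_dvd]
      push_cast
      exact sub_eq_zero.mpr hMone
    -- x centralizes P: contradiction
    apply hnc
    intro v hv
    have hvord : ((orderOf v : ℕ) : ℤ) ∣ m - 1 := by
      refine dvd_trans ?_ hPdvd
      exact_mod_cast (Subgroup.orderOf_mk v hv ▸ orderOf_dvd_natCard (⟨v, hv⟩ : P))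
    have hv1 : v ^ (m - 1) = 1 := orderOf_dvd_iff_zpow_eq_one.mp hvord
    have hvm : v ^ m = v := by
      have h5 : v ^ m = v ^ (m - 1) * v := by
        rw [← zpow_add_one, sub_add_cancel]
      rw [h5, hv1, one_mul]
    have h3 := hconj v hv
    rw [hvm] at h3
    have h4 := congrArg (fun w => w * x) h3
    simpa [mul_assoc] using h4
  -- (u*x)^n = 1
  have hS : ((p : ℤ) ^ e) ∣ ∑ i ∈ Finset.range n, m ^ i := by
    have hcop' : IsCoprime ((p : ℤ) ^ e) (m - 1) :=
      ((Nat.prime_iff_prime_int.mp hp).coprime_iff_not_dvd.mpr hm1).pow_left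
    have h1 : ((p : ℤ) ^ e) ∣ (∑ i ∈ Finset.range n, m ^ i) * (m - 1) := by
      rw [geom_sum_mul]
      rw [he] at hdvd1
      exact_mod_cast hdvd1
    exact hcop'.dvd_of_dvd_mul_right h1
  have hux_pow : (u * x) ^ n = 1 := by
    rw [hkey n, hxn, mul_one]
    rw [← orderOf_dvd_iff_zpow_eq_one] at *
    rw [he]
    exact_mod_cast hS
  have hdvd_ux : orderOf (u * x) ∣ n := orderOf_dvd_of_pow_eq_one hux_pow
  -- n divides orderOf (u*x) via quotient by P
  have hdvd_x : n ∣ orderOf (u * x) := by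
    have hinj : Function.Injective ((QuotientGroup.mk' P).comp F.subtype) := by
      rw [← MonoidHom.ker_eq_bot_iff, eq_bot_iff]
      intro y hy
      simp only [MonoidHom.mem_ker, MonoidHom.comp_apply, QuotientGroup.mk'_apply,
        QuotientGroup.eq_one_iff] at hy
      have h2 : (y : G) ∈ (⊥ : Subgroup G) :=
        hcompl.disjoint.le_bot (Subgroup.mem_inf.mpr ⟨hy, y.2⟩)
      rw [Subgroup.mem_bot] at h2
      rw [Subgroup.mem_bot]
      exact Subtype.ext h2
    have h1 : orderOf x = orderOf (((QuotientGroup.mk' P).comp F.subtype) ⟨x, hx⟩) := by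
      rw [orderOf_injective _ hinj, Subgroup.orderOf_mk]
    have h2 : ((QuotientGroup.mk' P).comp F.subtype) ⟨x, hx⟩
        = QuotientGroup.mk (s := P) (u * x) := by
      simp only [MonoidHom.comp_apply, QuotientGroup.mk'_apply, Subgroup.coe_subtype]
      rw [QuotientGroup.mk_mul]
      have : (QuotientGroup.mk u : G ⧸ P) = 1 := (QuotientGroup.eq_one_iff u).mpr hu
      rw [this, one_mul]
    rw [hn, h1, h2]
    exact orderOf_map_dvd (QuotientGroup.mk' P) (u * x)
  exact Nat.dvd_antisymm hdvd_ux hdvd_x
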